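/- Assume g ∈ C²([0,∞)) satisfies (A1) g(t)>0 and g'(t)>0, (A2) 1/g ∈ L¹(0,∞), and (A3) |d_t^k g(t)| ≤ C_k g(t)(g(t)/G(t))^k for k=1,2, with G(t)=½∫₀ᵗ g(τ)dτ. Fix N > 0. Then there exists C > 0 such that for every ξ, every C² solution û(·,ξ) of the Fourier-transformed equation with data û(0,ξ)=û₀(ξ), û_t(0,ξ)=û₁(ξ), and every t ≥ 0 with G(t)|ξ|² ≤ N: for any real s ≥ 2, |ξ|^{s}|û(t,ξ)| ≤ C ( |ξ|^{s}|û₀(ξ)| + |ξ|^{s−2}|û₁(ξ)| ), and for any real r ≥ 0, |ξ|^{r}|û_t(t,ξ)| ≤ C g(t) ( |ξ|^{r+2}|û₀(ξ)| + |ξ|^{r}|û₁(ξ)| ). -/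

import Mathlib

open Set MeasureTheory Filter Topology

lemma normsq_eq (z : ℂ) : ‖z‖^2 = z.re*z.re + z.im*z.im := by
  rw [Complex.sq_norm, Complex.normSq_apply]

lemma qpos (z : ℂ) {ε : ℝ} (hε : 0 < ε) : 0 < z.re*z.re + z.im*z.im + ε*ε := by
  nlinarith [mul_self_nonneg z.re, mul_self_nonneg z.im]

lemma norm_le_sqrtq (z : ℂ) (ε : ℝ) : ‖z‖ ≤ Real.sqrt (z.re*z.re + z.im*z.im + ε*ε) := by
  rw [show z.re*z.re + z.im*z.im + ε*ε = ‖z‖^2 + ε*ε by rw [normsq_eq]]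
  calc ‖z‖ = Real.sqrt (‖z‖^2) := by rw [Real.sqrt_sq (norm_nonneg z)]
    _ ≤ _ := Real.sqrt_le_sqrt (by nlinarith [mul_self_nonneg ε])

lemma sqrtq_le (z : ℂ) {ε : ℝ} (hε : 0 ≤ ε) :
    Real.sqrt (z.re*z.re + z.im*z.im + ε*ε) ≤ ‖z‖ + ε := by
  have h1 : z.re*z.re + z.im*z.im + ε*ε ≤ (‖z‖ + ε)^2 := by
    have h2 := normsq_eq z
    nlinarith [norm_nonneg z]
  calc Real.sqrt (z.re*z.re + z.im*z.im + ε*ε) ≤ Real.sqrt ((‖z‖+ε)^2) := Real.sqrt_le_sqrt h1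
    _ = ‖z‖ + ε := Real.sqrt_sq (by positivity)

lemma eps_le_sqrtq (z : ℂ) {ε : ℝ} (hε : 0 ≤ ε) :
    ε ≤ Real.sqrt (z.re*z.re + z.im*z.im + ε*ε) := by
  calc ε = Real.sqrt (ε*ε) := (Real.sqrt_mul_self hε).symm
    _ ≤ _ := Real.sqrt_le_sqrt (by nlinarith [mul_self_nonneg z.re, mul_self_nonneg z.im])

lemma cs_q' (z w : ℂ) (ε : ℝ) :
    |z.re*w.re + z.im*w.im| ≤
      Real.sqrt (z.re*z.re + z.im*z.im + ε*ε) * Real.sqrt (w.re*w.re + w.im*w.im + ε*ε) := by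
  have hq1 : (0:ℝ) ≤ z.re*z.re + z.im*z.im + ε*ε := by
    nlinarith [mul_self_nonneg z.re, mul_self_nonneg z.im, mul_self_nonneg ε]
  rw [← Real.sqrt_mul hq1, ← Real.sqrt_sq_eq_abs]
  apply Real.sqrt_le_sqrt
  nlinarith [sq_nonneg (z.re*w.im - z.im*w.re), mul_self_nonneg z.re, mul_self_nonneg z.im,
    mul_self_nonneg w.re, mul_self_nonneg w.im, mul_self_nonneg ε, sq_nonneg (z.re*w.re + z.im*w.im)]

lemma helper_sqrt_deriv (v w : ℝ → ℂ) (x ε : ℝ) (hε : 0 < ε) (hv : HasDerivAt v (w x) x) :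
    HasDerivAt (fun y => Real.sqrt ((v y).re*(v y).re + (v y).im*(v y).im + ε*ε))
      (((v x).re*(w x).re + (v x).im*(w x).im) /
        Real.sqrt ((v x).re*(v x).re + (v x).im*(v x).im + ε*ε)) x := by
  have hvr : HasDerivAt (fun y => (v y).re) ((w x).re) x :=
    Complex.reCLM.hasFDerivAt.comp_hasDerivAt x hv
  have hvi : HasDerivAt (fun y => (v y).im) ((w x).im) x :=
    Complex.imCLM.hasFDerivAt.comp_hasDerivAt x hv
  have hq : HasDerivAt (fun y => (v y).re*(v y).re + (v y).im*(v y).im + ε*ε)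
      ((w x).re*(v x).re + (v x).re*(w x).re + ((w x).im*(v x).im + (v x).im*(w x).im)) x :=
    ((hvr.mul hvr).add (hvi.mul hvi)).add_const (ε*ε)
  have h := hq.sqrt (ne_of_gt (qpos (v x) hε))
  convert h using 1
  rw [show (w x).re*(v x).re + (v x).re*(w x).re + ((w x).im*(v x).im + (v x).im*(w x).im)
      = 2*((v x).re*(w x).re + (v x).im*(w x).im) by ring,
    mul_div_mul_left _ _ (two_ne_zero)]

lemma core_ineq (g a ε s1 s2 σ1 σ2 dρ : ℝ) (hg : 0 < g) (ha : 0 < a) (hε : 0 < ε)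
    (h1 : ε ≤ σ1) (h2 : ε ≤ σ2) (hs : |s1| ≤ σ1*σ2) (hdρ : dρ ≤ 0)
    (hs2 : s2 = -(a*s1) - g*a*(σ2*σ2 - ε*ε)) :
    s1/σ1 + (dρ*σ2 + (g*a)⁻¹*(s2/σ2)) ≤ (σ1 + (g*a)⁻¹*σ2)/g + ε := by
  have hσ1p : 0 < σ1 := lt_of_lt_of_le hε h1
  have hσ2p : 0 < σ2 := lt_of_lt_of_le hε h2
  have t1 : s1/σ1 ≤ σ2 := by
    rw [div_le_iff₀ hσ1p]
    calc s1 ≤ |s1| := le_abs_self s1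
      _ ≤ σ1*σ2 := hs
      _ = σ2*σ1 := by ring
  have t2 : dρ*σ2 ≤ 0 := mul_nonpos_of_nonpos_of_nonneg hdρ hσ2p.le
  have h4 : -(σ1*σ2) ≤ s1 := (abs_le.1 hs).1
  have hnum : s2 ≤ a*(σ1*σ2) - g*a*(σ2*σ2) + g*a*(ε*ε) := by
    rw [hs2]; nlinarith [mul_le_mul_of_nonneg_left h4 ha.le]
  have t3 : (g*a)⁻¹*(s2/σ2) ≤ σ1/g - σ2 + ε := by
    have h5 : (g*a)⁻¹*(s2/σ2) ≤ (g*a)⁻¹*((a*(σ1*σ2) - g*a*(σ2*σ2) + g*a*(ε*ε))/σ2) := by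
      gcongr
    have h6 : (g*a)⁻¹*((a*(σ1*σ2) - g*a*(σ2*σ2) + g*a*(ε*ε))/σ2) = σ1/g - σ2 + ε*ε/σ2 := by
      field_simp
    have h7 : ε*ε/σ2 ≤ ε := by
      rw [div_le_iff₀ hσ2p]; nlinarith
    linarith [h5, h6.le, h6.ge, h7]
  have t4 : σ1/g ≤ (σ1 + (g*a)⁻¹*σ2)/g := by
    gcongr
    nlinarith [mul_nonneg (inv_nonneg.2 (mul_pos hg ha).le) hσ2p.le]
  linarith

lemma lim_eps (b c K : ℝ) (h : ∀ ε, 0 < ε → b ≤ c + ε*K) : b ≤ c := by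
  by_contra hbc
  push_neg at hbc
  rcases le_or_gt K 0 with hK | hK
  · have h1 := h 1 one_pos
    nlinarith
  · have hp : 0 < (b-c)/(2*K) := by
      apply div_pos (by linarith) (by linarith)
    have h1 := h _ hp
    have h2 : ((b-c)/(2*K))*K = (b-c)/2 := by field_simp
    nlinarith

lemma visc_aux
    (g g' : ℝ → ℝ)
    (hg_deriv : ∀ t ∈ Ici (0:ℝ), HasDerivWithinAt g (g' t) (Ici 0) t)
    (hA1 : ∀ t ∈ Ici (0:ℝ), 0 < g t ∧ 0 < g' t)
    (hA2 : IntegrableOn (fun t => 1 / g t) (Ici 0))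
    (a : ℝ) (ha : 0 < a)
    (u u' u'' : ℝ → ℂ)
    (hu : ∀ t ∈ Ici (0:ℝ), HasDerivWithinAt u (u' t) (Ici 0) t)
    (hu' : ∀ t ∈ Ici (0:ℝ), HasDerivWithinAt u' (u'' t) (Ici 0) t)
    (heq : ∀ t ∈ Ici (0:ℝ), u'' t = -((a:ℂ) * u t) - (g t : ℂ) * (a:ℂ) * u' t)
    (t : ℝ) (ht : 0 ≤ t) :
    ‖u t‖ ≤ Real.exp (∫ τ in Ici (0:ℝ), 1 / g τ) * (‖u 0‖ + ‖u' 0‖ / (g 0 * a)) ∧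
    ‖u' t‖ ≤ g t * a *
      (Real.exp (∫ τ in Ici (0:ℝ), 1 / g τ) * (‖u 0‖ + ‖u' 0‖ / (g 0 * a))) := by
  have h0 : (0:ℝ) ∈ Ici (0:ℝ) := mem_Ici.2 le_rfl
  have hg0 : 0 < g 0 := (hA1 0 h0).1
  set I := ∫ τ in Ici (0:ℝ), 1 / g τ with hIdef
  set P : ℝ → ℝ := fun x => ∫ τ in (0:ℝ)..x, 1 / g τ with hPdef
  have hgpos : ∀ x ∈ Ici (0:ℝ), 0 < g x := fun x hx => (hA1 x hx).1
  have hg_cont : ContinuousOn g (Ici 0) := fun x hx => (hg_deriv x hx).continuousWithinAt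
  have hinv_cont : ContinuousOn (fun τ => 1 / g τ) (Ici 0) :=
    continuousOn_const.div hg_cont (fun x hx => (hgpos x hx).ne')
  have hInt : ∀ x : ℝ, 0 ≤ x → IntervalIntegrable (fun τ => 1 / g τ) volume 0 x := by
    intro x hx
    apply ContinuousOn.intervalIntegrable
    rw [uIcc_of_le hx]
    exact hinv_cont.mono Icc_subset_Ici_self
  have hPnonneg : ∀ x, 0 ≤ x → 0 ≤ P x := by
    intro x hx
    apply intervalIntegral.integral_nonneg hx
    intro τ hτ
    have := hgpos τ hτ.1
    positivity
  have hPle : ∀ x, 0 ≤ x → P x ≤ I := by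
    intro x hx
    rw [hPdef]
    simp only
    rw [intervalIntegral.integral_of_le hx]
    apply setIntegral_mono_set hA2
    · filter_upwards [ae_restrict_mem measurableSet_Ici] with τ hτ
      have := hgpos τ hτ
      positivity
    · exact HasSubset.Subset.eventuallyLE (fun y hy => le_of_lt hy.1)
  have hPderiv : ∀ x : ℝ, 0 < x → HasDerivAt P (1 / g x) x := by
    intro x hx
    exact intervalIntegral.integral_hasDerivAt_right (hInt x hx.le)
      ((hinv_cont.mono Ioi_subset_Ici_self).stronglyMeasurableAtFilter isOpen_Ioi x hx)
      ((hinv_cont x hx.le).continuousAt (Ici_mem_nhds hx))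
  have hPcont : ContinuousOn P (Ici 0) := by
    intro x hx
    rcases eq_or_lt_of_le (mem_Ici.1 hx) with h | h
    · have hd : HasDerivWithinAt P (1 / g 0) (Ici 0) 0 :=
        intervalIntegral.integral_hasDerivWithinAt_right (hInt 0 le_rfl)
          (ContinuousOn.stronglyMeasurableAtFilter_nhdsWithin
            (hinv_cont.mono Ioi_subset_Ici_self) measurableSet_Ioi 0)
          ((hinv_cont 0 (mem_Ici.2 le_rfl)).mono Ioi_subset_Ici_self)
      rw [← h]
      exact hd.continuousWithinAt
    · exact ((hPderiv x h).continuousAt).continuousWithinAt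
  have hu_cont : ContinuousOn u (Ici 0) := fun x hx => (hu x hx).continuousWithinAt
  have hu'_cont : ContinuousOn u' (Ici 0) := fun x hx => (hu' x hx).continuousWithinAt
  set X : ℝ := Real.exp I * (‖u 0‖ + ‖u' 0‖ / (g 0 * a)) with hXdef
  set K : ℝ := (1 + (g 0 * a)⁻¹ + t) * Real.exp I with hKdef
  have hgt : 0 < g t := hgpos t ht
  have hstep : ∀ ε, 0 < ε → ‖u t‖ ≤ X + ε*K ∧ ‖u' t‖ ≤ g t * a * (X + ε*K) := by
    intro ε hε
    set σ1 : ℝ → ℝ := fun y => Real.sqrt ((u y).re*(u y).re + (u y).im*(u y).im + ε*ε)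
      with hσ1def
    set σ2 : ℝ → ℝ := fun y => Real.sqrt ((u' y).re*(u' y).re + (u' y).im*(u' y).im + ε*ε)
      with hσ2def
    set ρ : ℝ → ℝ := fun y => (g y * a)⁻¹ with hρdef
    set W : ℝ → ℝ := fun y => (σ1 y + ρ y * σ2 y) * Real.exp (-(P y)) - ε*y with hWdef
    set D : ℝ → ℝ := fun x =>
      (((u x).re*(u' x).re + (u x).im*(u' x).im)/σ1 x
        + (-(g' x * a)/(g x * a)^2 * σ2 x
          + ρ x * (((u' x).re*(u'' x).re + (u' x).im*(u'' x).im)/σ2 x)))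
        * Real.exp (-(P x))
      + (σ1 x + ρ x * σ2 x) * (Real.exp (-(P x)) * -(1/g x)) - ε*1 with hDdef
    have hσ1pos : ∀ y, 0 < σ1 y := fun y => Real.sqrt_pos.2 (qpos (u y) hε)
    have hσ2pos : ∀ y, 0 < σ2 y := fun y => Real.sqrt_pos.2 (qpos (u' y) hε)
    have hWderiv : ∀ x ∈ Ioi (0:ℝ), HasDerivAt W (D x) x := by
      intro x hx
      have hxI : x ∈ Ici (0:ℝ) := Ioi_subset_Ici_self hx
      have hN : Ici (0:ℝ) ∈ 𝓝 x := Ici_mem_nhds hx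
      have hux : HasDerivAt u (u' x) x := (hu x hxI).hasDerivAt hN
      have hu'x : HasDerivAt u' (u'' x) x := (hu' x hxI).hasDerivAt hN
      have hgx : HasDerivAt g (g' x) x := (hg_deriv x hxI).hasDerivAt hN
      have hσ1x : HasDerivAt σ1
          (((u x).re*(u' x).re + (u x).im*(u' x).im)/σ1 x) x :=
        helper_sqrt_deriv u u' x ε hε hux
      have hσ2x : HasDerivAt σ2
          (((u' x).re*(u'' x).re + (u' x).im*(u'' x).im)/σ2 x) x :=
        helper_sqrt_deriv u' u'' x ε hε hu'x
      have hρx : HasDerivAt ρ (-(g' x * a)/(g x * a)^2) x :=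
        (hgx.mul_const a).inv (ne_of_gt (mul_pos (hgpos x hxI) ha))
      have hPx : HasDerivAt P (1/g x) x := hPderiv x hx
      have hEx : HasDerivAt (fun y => Real.exp (-(P y)))
          (Real.exp (-(P x)) * -(1/g x)) x := hPx.neg.exp
      have hsum := hσ1x.add (hρx.mul hσ2x)
      have hprod := hsum.mul hEx
      have hlin : HasDerivAt (fun y => ε*y) (ε*1) x := (hasDerivAt_id x).const_mul ε
      exact hprod.sub hlin
    have hDnonpos : ∀ x ∈ Ioi (0:ℝ), D x ≤ 0 := by
      intro x hx
      have hxI : x ∈ Ici (0:ℝ) := Ioi_subset_Ici_self hx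
      have hgx := hgpos x hxI
      have hg'x := (hA1 x hxI).2
      have hσ1ε : ε ≤ σ1 x := eps_le_sqrtq (u x) hε.le
      have hσ2ε : ε ≤ σ2 x := eps_le_sqrtq (u' x) hε.le
      have hcs : |(u x).re*(u' x).re + (u x).im*(u' x).im| ≤ σ1 x * σ2 x :=
        cs_q' (u x) (u' x) ε
      have hq2 : σ2 x * σ2 x = (u' x).re*(u' x).re + (u' x).im*(u' x).im + ε*ε :=
        Real.mul_self_sqrt (le_of_lt (qpos (u' x) hε))
      have heqx := heq x hxI
      have hre : (u'' x).re = -(a*(u x).re) - g x*a*(u' x).re := by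
        rw [heqx]
        simp [Complex.mul_re, Complex.ofReal_re, Complex.ofReal_im]
        try ring
      have him : (u'' x).im = -(a*(u x).im) - g x*a*(u' x).im := by
        rw [heqx]
        simp [Complex.mul_im, Complex.mul_re, Complex.ofReal_re, Complex.ofReal_im]
        try ring
      have hs2eq : (u' x).re*(u'' x).re + (u' x).im*(u'' x).im
          = -(a*((u x).re*(u' x).re + (u x).im*(u' x).im)) - g x*a*(σ2 x*σ2 x - ε*ε) := by
        rw [hq2, hre, him]; ring
      have hdρ : -(g' x * a)/(g x * a)^2 ≤ 0 := by
        apply div_nonpos_of_nonpos_of_nonneg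
        · nlinarith
        · positivity
      have hcore := core_ineq (g x) a ε
        ((u x).re*(u' x).re + (u x).im*(u' x).im)
        ((u' x).re*(u'' x).re + (u' x).im*(u'' x).im)
        (σ1 x) (σ2 x) (-(g' x * a)/(g x * a)^2)
        hgx ha hε hσ1ε hσ2ε hcs hdρ hs2eq
    -- D x ≤ 0
      have he1 : Real.exp (-(P x)) ≤ 1 := by
        rw [Real.exp_le_one_iff]
        linarith [hPnonneg x hxI]
      have hepos : 0 < Real.exp (-(P x)) := Real.exp_pos _
      set A := ((u x).re*(u' x).re + (u x).im*(u' x).im)/σ1 x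
        + (-(g' x * a)/(g x * a)^2 * σ2 x
          + ρ x * (((u' x).re*(u'' x).re + (u' x).im*(u'' x).im)/σ2 x)) with hAdef
      set B := σ1 x + ρ x * σ2 x with hBdef
      have hcoreA : A ≤ B/(g x) + ε := by
        rw [hAdef, hBdef, hρdef]
        exact hcore
      have hkey : (A - B/(g x)) * Real.exp (-(P x)) ≤ ε := by
        rcases le_or_gt (A - B/(g x)) 0 with h | h
        · exact le_trans (mul_nonpos_of_nonpos_of_nonneg h hepos.le) hε.le
        · calc (A - B/(g x)) * Real.exp (-(P x)) ≤ (A - B/(g x)) * 1 :=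
              mul_le_mul_of_nonneg_left he1 h.le
            _ ≤ ε := by linarith
      have hDx : D x = (A - B/(g x)) * Real.exp (-(P x)) - ε*1 := by
        rw [hDdef, hAdef, hBdef]
        simp only
        field_simp
        ring
      rw [hDx]
      linarith
    have c1 : ContinuousOn (fun y => (u y).re) (Ici 0) :=
      Complex.continuous_re.comp_continuousOn hu_cont
    have c2 : ContinuousOn (fun y => (u y).im) (Ici 0) :=
      Complex.continuous_im.comp_continuousOn hu_cont
    have c3 : ContinuousOn (fun y => (u' y).re) (Ici 0) :=
      Complex.continuous_re.comp_continuousOn hu'_cont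
    have c4 : ContinuousOn (fun y => (u' y).im) (Ici 0) :=
      Complex.continuous_im.comp_continuousOn hu'_cont
    have hσ1_cont : ContinuousOn σ1 (Ici 0) :=
      Real.continuous_sqrt.comp_continuousOn (((c1.mul c1).add (c2.mul c2)).add continuousOn_const)
    have hσ2_cont : ContinuousOn σ2 (Ici 0) :=
      Real.continuous_sqrt.comp_continuousOn (((c3.mul c3).add (c4.mul c4)).add continuousOn_const)
    have hρ_cont : ContinuousOn ρ (Ici 0) :=
      (hg_cont.mul continuousOn_const).inv₀
        (fun x hx => ne_of_gt (mul_pos (hgpos x hx) ha))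
    have hW_cont : ContinuousOn W (Ici 0) :=
      ((hσ1_cont.add (hρ_cont.mul hσ2_cont)).mul
        (Real.continuous_exp.comp_continuousOn hPcont.neg)).sub
        (continuous_const.mul continuous_id).continuousOn
    have hanti : AntitoneOn W (Ici 0) :=
      antitoneOn_of_hasDerivWithinAt_nonpos (convex_Ici 0) hW_cont
        (by rw [interior_Ici]; exact fun x hx => (hWderiv x hx).hasDerivWithinAt)
        (by rw [interior_Ici]; exact hDnonpos)
    have hWt : W t ≤ W 0 := hanti (mem_Ici.2 le_rfl) (mem_Ici.2 ht) ht
    have hP0 : P 0 = 0 := intervalIntegral.integral_same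
    have hW0 : W 0 = σ1 0 + ρ 0 * σ2 0 := by
      rw [hWdef]
      simp only
      rw [hP0]
      simp
    have hWteq : σ1 t + ρ t * σ2 t = (W t + ε*t) * Real.exp (P t) := by
      rw [hWdef]
      simp only
      rw [Real.exp_neg]
      field_simp
      ring
    have hρ0 : 0 ≤ ρ 0 := by rw [hρdef]; positivity
    have hρt : 0 ≤ ρ t := by rw [hρdef]; positivity
    have hW0le : W 0 ≤ (‖u 0‖ + ε) + ρ 0 * (‖u' 0‖ + ε) := by
      rw [hW0]
      have l1 : σ1 0 ≤ ‖u 0‖ + ε := sqrtq_le (u 0) hε.le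
      have l2 : σ2 0 ≤ ‖u' 0‖ + ε := sqrtq_le (u' 0) hε.le
      nlinarith [hσ2pos 0]
    have hbound : σ1 t + ρ t * σ2 t ≤ ((‖u 0‖+ε) + ρ 0*(‖u' 0‖+ε) + ε*t) * Real.exp I := by
      rw [hWteq]
      apply mul_le_mul _ (Real.exp_le_exp.2 (hPle t ht)) (Real.exp_pos _).le _
      · linarith
      · have h1 : 0 ≤ ‖u 0‖ + ε := by positivity
        have h2 : 0 ≤ ρ 0 * (‖u' 0‖ + ε) := mul_nonneg hρ0 (by positivity)
        have h3 : 0 ≤ ε*t := mul_nonneg hε.le ht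
        linarith
    have hexpand : ((‖u 0‖+ε) + ρ 0*(‖u' 0‖+ε) + ε*t) * Real.exp I = X + ε*K := by
      rw [hρdef, hXdef, hKdef]
      simp only
      field_simp
      ring
    constructor
    · have l3 : ‖u t‖ ≤ σ1 t := norm_le_sqrtq (u t) ε
      have l4 : 0 ≤ ρ t * σ2 t := mul_nonneg hρt (hσ2pos t).le
      linarith [hbound, hexpand.le, hexpand.ge]
    · have l4 : ‖u' t‖ ≤ σ2 t := norm_le_sqrtq (u' t) ε
      have l5 : σ2 t = (g t * a) * (ρ t * σ2 t) := by
        rw [hρdef]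
        field_simp
      have l6 : ρ t * σ2 t ≤ σ1 t + ρ t * σ2 t := by linarith [hσ1pos t]
      calc ‖u' t‖ ≤ σ2 t := l4
        _ = (g t * a) * (ρ t * σ2 t) := l5
        _ ≤ (g t * a) * (σ1 t + ρ t * σ2 t) :=
            mul_le_mul_of_nonneg_left l6 (by positivity)
        _ ≤ (g t * a) * (X + ε*K) := by
            apply mul_le_mul_of_nonneg_left _ (by positivity)
            linarith [hbound, hexpand.le]
  constructor
  · apply lim_eps _ _ K
    exact fun ε hε => (hstep ε hε).1
  · apply lim_eps _ _ (g t * a * K)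
    intro ε hε
    have h := (hstep ε hε).2
    have : g t * a * (X + ε*K) = g t * a * X + ε*(g t * a * K) := by ring
    linarith

theorem stmt_5
    (n : ℕ)
    (g g' g'' : ℝ → ℝ)
    (hg_deriv : ∀ t ∈ Ici (0:ℝ), HasDerivWithinAt g (g' t) (Ici 0) t)
    (hg_deriv' : ∀ t ∈ Ici (0:ℝ), HasDerivWithinAt g' (g'' t) (Ici 0) t)
    (hg_cont : ContinuousOn g'' (Ici 0))
    (hA1 : ∀ t ∈ Ici (0:ℝ), 0 < g t ∧ 0 < g' t)
    (hA2 : IntegrableOn (fun t => 1 / g t) (Ici 0))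
    (hA3 : ∃ C₁ > (0:ℝ), ∃ C₂ > (0:ℝ), ∀ t ∈ Ici (0:ℝ),
      |g' t| * ((1/2) * ∫ τ in (0:ℝ)..t, g τ) ≤ C₁ * g t * g t ∧
      |g'' t| * ((1/2) * ∫ τ in (0:ℝ)..t, g τ) ^ 2 ≤ C₂ * g t * g t ^ 2)
    (N : ℝ) (hN : 0 < N) :
    ∃ C > (0:ℝ),
      ∀ (ξ : EuclideanSpace ℝ (Fin n)),
      ∀ (u u' u'' : ℝ → ℂ),
      (∀ t ∈ Ici (0:ℝ), HasDerivWithinAt u (u' t) (Ici 0) t) →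
      (∀ t ∈ Ici (0:ℝ), HasDerivWithinAt u' (u'' t) (Ici 0) t) →
      ContinuousOn u'' (Ici 0) →
      (∀ t ∈ Ici (0:ℝ),
        u'' t + (‖ξ‖ : ℂ) ^ 2 * u t + (g t : ℂ) * (‖ξ‖ : ℂ) ^ 2 * u' t = 0) →
      ∀ t : ℝ, 0 ≤ t →
        ((1/2) * ∫ τ in (0:ℝ)..t, g τ) * ‖ξ‖ ^ 2 ≤ N →
        (∀ s : ℝ, 2 ≤ s →
          ‖ξ‖ ^ s * ‖u t‖ ≤ C * (‖ξ‖ ^ s * ‖u 0‖ + ‖ξ‖ ^ (s - 2) * ‖u' 0‖)) ∧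
        (∀ r : ℝ, 0 ≤ r →
          ‖ξ‖ ^ r * ‖u' t‖ ≤
            C * g t * (‖ξ‖ ^ (r + 2) * ‖u 0‖ + ‖ξ‖ ^ r * ‖u' 0‖)) := by
  have h0 : (0:ℝ) ∈ Ici (0:ℝ) := mem_Ici.2 le_rfl
  have hg0 : 0 < g 0 := (hA1 0 h0).1
  set I := ∫ τ in Ici (0:ℝ), 1 / g τ with hIdef
  have hIpos : 0 ≤ I := setIntegral_nonneg measurableSet_Ici (fun τ hτ => by
    have := (hA1 τ hτ).1; positivity)
  set E := Real.exp I with hEdef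
  have hE1 : 1 ≤ E := by
    rw [hEdef, show (1:ℝ) = Real.exp 0 by rw [Real.exp_zero]]
    exact Real.exp_le_exp.2 hIpos
  have hEpos : 0 < E := lt_of_lt_of_le one_pos hE1
  have hgmono : MonotoneOn g (Ici 0) := by
    apply monotoneOn_of_hasDerivWithinAt_nonneg (convex_Ici 0)
      (fun x hx => (hg_deriv x hx).continuousWithinAt) (f' := g')
    · intro x hx
      rw [interior_Ici] at hx ⊢
      exact ((hg_deriv x (Ioi_subset_Ici_self hx)).hasDerivAt (Ici_mem_nhds hx)).hasDerivWithinAt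
    · intro x hx
      rw [interior_Ici] at hx
      exact (hA1 x (Ioi_subset_Ici_self hx)).2.le
  set C := E * (1 + 1/g 0) with hCdef
  have hCpos : 0 < C := by positivity
  have hCE : E ≤ C := by
    rw [hCdef]
    nlinarith [one_div_pos.2 hg0]
  have hCEg : E/g 0 ≤ C := by
    rw [hCdef]
    rw [div_eq_mul_inv, ← one_div]
    nlinarith
  have hCg : 1 ≤ C * g 0 := by
    have hcg : C * g 0 = E * (g 0 + 1) := by rw [hCdef]; field_simp
    nlinarith
  refine ⟨C, hCpos, ?_⟩
  intro ξ u u' u'' hu hu' hu''cont hode t ht hzone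
  have htI : t ∈ Ici (0:ℝ) := mem_Ici.2 ht
  have hgt : 0 < g t := (hA1 t htI).1
  have hg0t : g 0 ≤ g t := hgmono h0 htI ht
  rcases eq_or_lt_of_le (norm_nonneg ξ) with hξ0 | hξpos
  · -- ‖ξ‖ = 0
    have hxi : ‖ξ‖ = 0 := hξ0.symm
    have hu''0 : ∀ x ∈ Ici (0:ℝ), u'' x = 0 := by
      intro x hx
      have h := hode x hx
      rw [hxi] at h
      simpa using h
    have hu't : u' t = u' 0 := by
      have huconst := constant_of_has_deriv_right_zero
        (f := u') (a := 0) (b := t)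
        (fun x hx => ((hu' x (mem_Ici.2 hx.1)).continuousWithinAt).mono Icc_subset_Ici_self)
        (fun x hx => by
          have h1 : HasDerivWithinAt u' (u'' x) (Ici 0) x := hu' x (mem_Ici.2 hx.1)
          rw [hu''0 x (mem_Ici.2 hx.1)] at h1
          exact h1.mono (Ici_subset_Ici.2 hx.1))
      exact huconst t (right_mem_Icc.2 ht)
    constructor
    · intro s hs
      rw [hxi, Real.zero_rpow (by linarith : s ≠ 0)]
      rw [zero_mul, zero_mul]
      have hq : 0 ≤ (0:ℝ) ^ (s-2) := Real.rpow_nonneg le_rfl _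
      have := norm_nonneg (u' 0)
      positivity
    · intro r hr
      rcases eq_or_lt_of_le hr with hr0 | hrpos
      · rw [← hr0, hxi, hu't]
        rw [Real.rpow_zero, Real.zero_rpow (by norm_num : (0:ℝ)+2 ≠ 0)]
        simp only [one_mul, zero_mul, zero_add]
        have h1 : 1 ≤ C * g t := by nlinarith
        nlinarith [norm_nonneg (u' 0)]
      · rw [hxi, Real.zero_rpow (ne_of_gt hrpos), zero_mul]
        have hq : 0 ≤ (0:ℝ) ^ (r+2) := Real.rpow_nonneg le_rfl _
        have := norm_nonneg (u 0)
        have := norm_nonneg (u' 0)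
        positivity
  · -- ‖ξ‖ > 0
    set a := ‖ξ‖^2 with hadef
    have ha : 0 < a := by positivity
    have heq : ∀ x ∈ Ici (0:ℝ), u'' x = -((a:ℂ) * u x) - (g x : ℂ) * (a:ℂ) * u' x := by
      intro x hx
      have h := hode x hx
      have hcast : ((a:ℝ):ℂ) = (‖ξ‖:ℂ)^2 := by rw [hadef]; push_cast; ring
      rw [hcast]
      linear_combination h
    obtain ⟨k1, k2⟩ := visc_aux g g' hg_deriv hA1 hA2 a ha u u' u'' hu hu' heq t ht
    rw [← hIdef, ← hEdef] at k1 k2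
    have h2 : ‖ξ‖^((2:ℝ)) = a := by
      rw [hadef, show ((2:ℝ)) = ((2:ℕ):ℝ) by norm_num, Real.rpow_natCast]
    constructor
    · intro s hs
      set p := ‖ξ‖^s with hpdef
      set q := ‖ξ‖^(s-2) with hqdef
      have hp : 0 ≤ p := Real.rpow_nonneg (norm_nonneg ξ) s
      have hq : 0 ≤ q := Real.rpow_nonneg (norm_nonneg ξ) _
      have hsub : q * a = p := by
        rw [hpdef, hqdef, ← h2, ← Real.rpow_add hξpos]
        norm_num
      have e1 : p * (E * (‖u 0‖ + ‖u' 0‖/(g 0*a))) = E*(p*‖u 0‖) + (E/g 0)*(q*‖u' 0‖) := by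
        rw [← hsub]; field_simp
      calc p * ‖u t‖ ≤ p * (E * (‖u 0‖ + ‖u' 0‖/(g 0*a))) := mul_le_mul_of_nonneg_left k1 hp
        _ = E*(p*‖u 0‖) + (E/g 0)*(q*‖u' 0‖) := e1
        _ ≤ C*(p*‖u 0‖) + C*(q*‖u' 0‖) := by
            apply add_le_add
            · exact mul_le_mul_of_nonneg_right hCE (mul_nonneg hp (norm_nonneg _))
            · exact mul_le_mul_of_nonneg_right hCEg (mul_nonneg hq (norm_nonneg _))
        _ = C*(p*‖u 0‖ + q*‖u' 0‖) := by ring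
    · intro r hr
      set p := ‖ξ‖^r with hpdef
      set q := ‖ξ‖^(r+2) with hqdef
      have hp : 0 ≤ p := Real.rpow_nonneg (norm_nonneg ξ) r
      have hq : 0 ≤ q := Real.rpow_nonneg (norm_nonneg ξ) _
      have hsub : q = p * a := by
        rw [hpdef, hqdef, ← h2, ← Real.rpow_add hξpos]
      have e1 : p * (g t * a * (E * (‖u 0‖ + ‖u' 0‖/(g 0*a))))
          = g t * (E*(q*‖u 0‖) + (E/g 0)*(p*‖u' 0‖)) := by
        rw [hsub]; field_simp
      calc p * ‖u' t‖ ≤ p * (g t * a * (E * (‖u 0‖ + ‖u' 0‖/(g 0*a)))) :=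
            mul_le_mul_of_nonneg_left k2 hp
        _ = g t * (E*(q*‖u 0‖) + (E/g 0)*(p*‖u' 0‖)) := e1
        _ ≤ g t * (C*(q*‖u 0‖) + C*(p*‖u' 0‖)) := by
            apply mul_le_mul_of_nonneg_left _ hgt.le
            apply add_le_add
            · exact mul_le_mul_of_nonneg_right hCE (mul_nonneg hq (norm_nonneg _))
            · exact mul_le_mul_of_nonneg_right hCEg (mul_nonneg hp (norm_nonneg _))
        _ = C * g t * (q*‖u 0‖ + p*‖u' 0‖) := by ring
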